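/- Let H be a finite connected graph with excess Exc(H) = |E(H)| − |V(H)| = k, where k ≥ −1, and let T be any spanning tree of H. Then diam(T) ≤ 2(k + 2) diam(H) + k + 1. -/

import Mathlib

namespace SpanAux
open SimpleGraph

variable {V : Type*} {G : SimpleGraph V}

/-- Take the first `n` steps of a walk. -/
def wtake : ∀ {a b : V} (w : G.Walk a b) (n : ℕ), G.Walk a (w.getVert n)
  | _, _, .nil, _ => .nil
  | _, _, .cons _ _, 0 => .nil
  | _, _, .cons h w, (n+1) => .cons h (wtake w n)

/-- Drop the first `n` steps of a walk. -/
def wdrop : ∀ {a b : V} (w : G.Walk a b) (n : ℕ), G.Walk (w.getVert n) b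
  | _, _, .nil, _ => .nil
  | _, _, .cons h w, 0 => .cons h w
  | _, _, .cons _ w, (n+1) => wdrop w n

lemma edges_wtake : ∀ {a b : V} (w : G.Walk a b) (n : ℕ),
    (wtake w n).edges = w.edges.take n
  | _, _, .nil, n => by simp [wtake]
  | _, _, .cons _ _, 0 => rfl
  | _, _, .cons h w, (n+1) => by
      simp [wtake, Walk.edges_cons, edges_wtake w n]

lemma edges_wdrop : ∀ {a b : V} (w : G.Walk a b) (n : ℕ),
    (wdrop w n).edges = w.edges.drop n
  | _, _, .nil, n => by simp [wdrop]
  | _, _, .cons _ _, 0 => rfl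
  | _, _, .cons h w, (n+1) => by
      simp [wdrop, Walk.edges_cons, edges_wdrop w n]

lemma getVert_wdrop : ∀ {a b : V} (w : G.Walk a b) (m t : ℕ),
    (wdrop w m).getVert t = w.getVert (m + t)
  | _, _, .nil, _, _ => rfl
  | _, _, .cons h w, 0, t => by rw [Nat.zero_add]; rfl
  | _, _, .cons h w, (m+1), t => by
      show (wdrop w m).getVert t = (Walk.cons h w).getVert (m + 1 + t)
      rw [getVert_wdrop w m t]
      have : m + 1 + t = (m + t) + 1 := by omega
      rw [this]
      rfl


/-- Crossing indicator of an edge w.r.t. a vertex 2-coloring. -/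
def cross (χ : V → ZMod 2) : Sym2 V → ZMod 2 :=
  Sym2.lift ⟨fun x y => χ x + χ y, fun x y => by simp [add_comm]⟩

lemma zmod2_add_self (x : ZMod 2) : x + x = 0 := by revert x; decide

lemma sum_map_cross (χ : V → ZMod 2) :
    ∀ {a b : V} (w : G.Walk a b), (w.edges.map (cross χ)).sum = χ a + χ b
  | _, _, .nil => by simp [zmod2_add_self]
  | a, b, .cons (v := c) h w => by
      rw [Walk.edges_cons, List.map_cons, List.sum_cons, sum_map_cross χ w]
      show cross χ s(a, c) + _ = _
      rw [cross, Sym2.lift_mk]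
      show χ a + χ c + (χ c + χ b) = χ a + χ b
      rw [add_assoc, ← add_assoc (χ c), zmod2_add_self, zero_add]

lemma list_sum_map_eq_sum_count {α M : Type*} [DecidableEq α] [AddCommMonoid M]
    (s : Finset α) (g : α → M) :
    ∀ (l : List α), (∀ x ∈ l, x ∉ s → g x = 0) →
      (l.map g).sum = ∑ e ∈ s, (l.count e) • g e
  | [], _ => by simp
  | (a :: l), h => by
      rw [List.map_cons, List.sum_cons,
        list_sum_map_eq_sum_count s g l (fun x hx => h x (List.mem_cons_of_mem a hx))]
      have : ∀ e ∈ s, ((a :: l).count e) • g e = (l.count e) • g e + (if a = e then g e else 0) := by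
        intro e _
        rw [List.count_cons]
        by_cases heq : a = e
        · subst heq; simp [add_smul]
        · simp [heq, fun hh : e = a => heq hh.symm]
      rw [Finset.sum_congr rfl this, Finset.sum_add_distrib, Finset.sum_ite_eq s a (fun e => g e)]
      by_cases ha : a ∈ s
      · rw [if_pos ha, add_comm]
      · rw [if_neg ha, h a List.mem_cons_self ha, add_zero, zero_add]

end SpanAux

open SpanAux SimpleGraph

/-- Diameter of a finite graph: maximal graph distance between two vertices. -/
noncomputable def gdiam {V : Type*} [Fintype V] (G : SimpleGraph V) : ℕ :=
  Finset.univ.sup fun p : V × V => G.dist p.1 p.2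

/-- Let `H` be a finite connected graph with excess
`Exc(H) = |E(H)| − |V(H)| = k`, `k ≥ −1`, and let `T` be any spanning tree of `H`.
Then `diam(T) ≤ 2 (k + 2) diam(H) + k + 1`. -/
theorem spanning_tree_diam_excess {V : Type*} [Fintype V] (H : SimpleGraph V)
    (hH : H.Connected) (k : ℤ) (hk : -1 ≤ k)
    (hexc : (Nat.card H.edgeSet : ℤ) - (Fintype.card V : ℤ) = k)
    (T : SimpleGraph V) (hT : T.IsTree) (hTH : T ≤ H) :
    (gdiam T : ℤ) ≤ 2 * (k + 2) * (gdiam H : ℤ) + k + 1 := by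
  classical
  set D : ℕ := gdiam H with hD
  set d : ℕ := gdiam T with hd
  have hne : Nonempty V := hT.isConnected.nonempty
  have hTsub : T.edgeFinset ⊆ H.edgeFinset := by
    exact SimpleGraph.edgeFinset_mono hTH
  set F : Finset (Sym2 V) := H.edgeFinset \ T.edgeFinset with hF
  set K : ℕ := F.card with hKdef
  have hcardH : (H.edgeFinset.card : ℤ) - (Fintype.card V : ℤ) = k := by
    rw [← hexc]
    congr 1
    rw [SimpleGraph.edgeFinset_card, Nat.card_eq_fintype_card]
  have hcardT : T.edgeFinset.card + 1 = Fintype.card V := hT.card_edgeFinset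
  have hK : (K : ℤ) = k + 1 := by
    have hsub : T.edgeFinset.card ≤ H.edgeFinset.card := Finset.card_le_card hTsub
    have : K = H.edgeFinset.card - T.edgeFinset.card := by
      rw [hKdef, hF, Finset.card_sdiff_of_subset hTsub]
    omega
  suffices hlt : d < (K + 1) * (D + 1) by
    have h0 : (0:ℤ) ≤ (k+2) * (D:ℤ) := mul_nonneg (by linarith) (by positivity)
    have h1 : (d:ℤ) < ((K:ℤ) + 1) * ((D:ℤ) + 1) := by
      exact_mod_cast Nat.cast_lt.mpr hlt
    rw [hK] at h1
    linarith [h1, h0]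
  by_contra hcon
  push_neg at hcon
  -- hcon : (K + 1) * (D + 1) ≤ d
  -- obtain a diametral geodesic path in T
  obtain ⟨pr, -, hpr⟩ := Finset.exists_mem_eq_sup (Finset.univ : Finset (V × V))
    Finset.univ_nonempty (fun p : V × V => T.dist p.1 p.2)
  obtain ⟨P0, hP0⟩ := hT.isConnected.exists_walk_length_eq_dist pr.1 pr.2
  set P : T.Walk pr.1 pr.2 := P0.bypass with hPdef
  have hPpath : P.IsPath := SimpleGraph.Walk.bypass_isPath P0
  have hPlen : P.length = d := by
    have h1 : T.dist pr.1 pr.2 ≤ P.length := SimpleGraph.dist_le P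
    have h2 : P.length ≤ P0.length := SimpleGraph.Walk.length_bypass_le P0
    rw [hd]
    show P.length = gdiam T
    rw [gdiam, hpr]
    omega
  have hPel : P.edges.length = d := by rw [SimpleGraph.Walk.length_edges, hPlen]
  have hPnodup : P.edges.Nodup := hPpath.edges_nodup
  -- equally spaced points
  set q : ℕ → V := fun m => P.getVert (m * (D + 1)) with hq
  -- tree path segments
  have hqd : ∀ i : ℕ, (wdrop P (i * (D + 1))).getVert (D + 1) = q (i + 1) := by
    intro i
    rw [getVert_wdrop, hq]
    congr 1
    ring
  set Pseg : ∀ i : ℕ, T.Walk (q i) (q (i + 1)) :=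
    fun i => (wtake (wdrop P (i * (D + 1))) (D + 1)).copy rfl (hqd i) with hPseg
  have hPsegE : ∀ i : ℕ, (Pseg i).edges = (P.edges.drop (i * (D + 1))).take (D + 1) := by
    intro i
    rw [hPseg]
    rw [SimpleGraph.Walk.edges_copy, edges_wtake, edges_wdrop]
  -- membership in segment edges gives position
  have hpos : ∀ (i : ℕ) (f : Sym2 V), f ∈ (Pseg i).edges →
      ∃ t : ℕ, t < D + 1 ∧ ∃ (ht : i * (D + 1) + t < P.edges.length),
        P.edges[i * (D + 1) + t] = f := by
    intro i f hf
    rw [hPsegE i] at hf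
    obtain ⟨t, ht, hft⟩ := List.mem_iff_getElem.mp hf
    have ht' : t < D + 1 := by
      have := ht
      rw [List.length_take] at this
      omega
    have hlen : t < (P.edges.drop (i * (D + 1))).length := by
      have := ht
      rw [List.length_take] at this
      omega
    have hlen2 : i * (D + 1) + t < P.edges.length := by
      rw [List.length_drop] at hlen
      omega
    refine ⟨t, ht', hlen2, ?_⟩
    rw [← hft, List.getElem_take, List.getElem_drop]
  have hsegnodup : ∀ i, (Pseg i).edges.Nodup := by
    intro i
    rw [hPsegE i]
    exact (((List.take_sublist _ _).trans (P.edges.drop_sublist _))).nodup hPnodup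
  have hdisj : ∀ i j : ℕ, i ≠ j → ∀ f, f ∈ (Pseg i).edges → f ∉ (Pseg j).edges := by
    intro i j hij f hfi hfj
    obtain ⟨t, ht, hti, hPt⟩ := hpos i f hfi
    obtain ⟨s, hs, hsj, hPs⟩ := hpos j f hfj
    have heq : i * (D + 1) + t = j * (D + 1) + s := by
      have := (List.Nodup.getElem_inj_iff hPnodup).mp (hPt.trans hPs.symm)
      exact this
    have e1 : (i + 1) * (D + 1) = i * (D + 1) + (D + 1) := by ring
    have e2 : (j + 1) * (D + 1) = j * (D + 1) + (D + 1) := by ring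
    rcases Nat.lt_or_ge i j with h | h
    · have h3 : (i + 1) * (D + 1) ≤ j * (D + 1) := Nat.mul_le_mul_right _ h
      omega
    · rcases Nat.lt_or_ge j i with h' | h'
      · have h3 : (j + 1) * (D + 1) ≤ i * (D + 1) := Nat.mul_le_mul_right _ h'
        omega
      · omega
  have hseglen : ∀ i : ℕ, i < K + 1 → (Pseg i).edges.length = D + 1 := by
    intro i hi
    rw [hPsegE i, List.length_take, List.length_drop, hPel]
    have h1 : (i + 1) * (D + 1) ≤ (K + 1) * (D + 1) := Nat.mul_le_mul_right _ hi
    have h2 : (i + 1) * (D + 1) = i * (D + 1) + (D + 1) := by ring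
    omega
  -- geodesics in H
  have hgam : ∀ i : ℕ, ∃ w : H.Walk (q i) (q (i + 1)), w.length ≤ D := by
    intro i
    obtain ⟨w, hw⟩ := hH.exists_walk_length_eq_dist (q i) (q (i + 1))
    refine ⟨w, ?_⟩
    rw [hw, hD]
    exact Finset.le_sup (f := fun p : V × V => H.dist p.1 p.2)
      (Finset.mem_univ (q i, q (i + 1)))
  choose γ hγ using hgam
  -- parity vectors of the geodesics on the non-tree edges
  set v : Fin (K + 1) → (↥F → ZMod 2) :=
    fun i e => ((γ i.1).edges.count e.1 : ZMod 2) with hv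
  have hdep : ¬ LinearIndependent (ZMod 2) v := by
    intro hli
    have hcard := hli.fintype_card_le_finrank
    rw [Module.finrank_pi, Fintype.card_coe, Fintype.card_fin] at hcard
    omega
  obtain ⟨g, hg0, i0, hi0⟩ := Fintype.not_linearIndependent_iff.mp hdep
  set I : Finset (Fin (K + 1)) := Finset.univ.filter (fun i => g i ≠ 0) with hI
  have hIne : I.Nonempty := ⟨i0, by simp [hI, hi0]⟩
  have hone : ∀ x : ZMod 2, x ≠ 0 → x = 1 := by decide
  have hsum : ∀ e : Sym2 V, e ∈ F → ∑ i ∈ I, (((γ i.1).edges.count e : ZMod 2)) = 0 := by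
    intro e he
    have h1 : ∑ i : Fin (K + 1), g i * ((γ i.1).edges.count e : ZMod 2) = 0 := by
      have h0 := congrFun hg0 ⟨e, he⟩
      simpa [Finset.sum_apply, hv] using h0
    rw [← Finset.sum_subset (Finset.subset_univ I) (fun x _ hx => ?_)] at h1
    · rw [← h1]
      apply Finset.sum_congr rfl
      intro i hi
      rw [hone (g i) (by simpa [hI] using hi), one_mul]
    · have hz : g x = 0 := by simpa [hI] using hx
      rw [hz, zero_mul]
  -- the key parity/cut argument
  have key : ∀ f : Sym2 V, f ∈ T.edgeSet → (∀ i ∈ I, f ∉ (γ i.1).edges) →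
      ∀ j : Fin (K + 1), j ∈ I → f ∈ (Pseg j.1).edges → False := by
    intro f
    induction f using Sym2.ind with
    | _ x y =>
    intro hfT hno j hj hf
    set G' : SimpleGraph V := T \ SimpleGraph.fromEdgeSet {s(x,y)} with hG'
    set χ : V → ZMod 2 := fun z => if G'.Reachable x z then 1 else 0 with hχ
    have hbr : ¬ G'.Reachable x y := by
      have hbridge := SimpleGraph.isAcyclic_iff_forall_edge_isBridge.mp hT.IsAcyclic hfT
      exact SimpleGraph.isBridge_iff.mp hbridge
    have hχx : χ x = 1 := by simp [hχ, SimpleGraph.Reachable.refl]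
    have hχy : χ y = 0 := by simp [hχ, hbr]
    have hcrossf : SpanAux.cross χ s(x,y) = 1 := by
      rw [SpanAux.cross, Sym2.lift_mk]
      show χ x + χ y = 1
      rw [hχx, hχy, add_zero]
    have hT0 : ∀ e ∈ T.edgeSet, e ≠ s(x,y) → SpanAux.cross χ e = 0 := by
      intro e
      induction e using Sym2.ind with
      | _ z w =>
      intro he hne
      have hadj : G'.Adj z w := by
        rw [hG', SimpleGraph.sdiff_adj]
        refine ⟨he, ?_⟩
        rw [SimpleGraph.fromEdgeSet_adj]
        rintro ⟨h1, -⟩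
        exact hne (by simpa using h1)
      have hzw : χ z = χ w := by
        rw [hχ]
        simp only
        by_cases hr : G'.Reachable x z
        · rw [if_pos hr, if_pos (hr.trans hadj.reachable)]
        · rw [if_neg hr, if_neg (fun hw => hr (hw.trans hadj.symm.reachable))]
      rw [SpanAux.cross, Sym2.lift_mk]
      show χ z + χ w = 0
      rw [hzw, SpanAux.zmod2_add_self]
    have hper : ∀ i : Fin (K + 1), i ∈ I →
        (∑ e ∈ F, ((γ i.1).edges.count e) • SpanAux.cross χ e)
          + ((Pseg i.1).edges.count s(x,y)) • SpanAux.cross χ s(x,y) = 0 := by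
      intro i hi
      have h1 := SpanAux.sum_map_cross (G := H) χ (γ i.1)
      have h2 := SpanAux.sum_map_cross (G := T) χ (Pseg i.1)
      have e1 : ((γ i.1).edges.map (SpanAux.cross χ)).sum
          = ∑ e ∈ F, ((γ i.1).edges.count e) • SpanAux.cross χ e := by
        apply SpanAux.list_sum_map_eq_sum_count
        intro a ha hanot
        have haH : a ∈ H.edgeSet := (γ i.1).edges_subset_edgeSet ha
        have haT : a ∈ T.edgeSet := by
          have haH' : a ∈ H.edgeFinset := SimpleGraph.mem_edgeFinset.mpr haH
          rw [hF] at hanot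
          simp only [Finset.mem_sdiff, not_and, not_not] at hanot
          exact SimpleGraph.mem_edgeFinset.mp (hanot haH')
        have hane : a ≠ s(x,y) := by
          rintro rfl
          exact hno i hi ha
        exact hT0 a haT hane
      have e2 : ((Pseg i.1).edges.map (SpanAux.cross χ)).sum
          = ∑ e ∈ ({s(x,y)} : Finset (Sym2 V)),
              ((Pseg i.1).edges.count e) • SpanAux.cross χ e := by
        apply SpanAux.list_sum_map_eq_sum_count
        intro a ha hanot
        have haT : a ∈ T.edgeSet := (Pseg i.1).edges_subset_edgeSet ha
        exact hT0 a haT (by simpa using hanot)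
      rw [e1] at h1
      rw [e2, Finset.sum_singleton] at h2
      rw [h1, h2]
      exact SpanAux.zmod2_add_self _
    have htot : ∑ i ∈ I, ((∑ e ∈ F, ((γ i.1).edges.count e) • SpanAux.cross χ e)
        + ((Pseg i.1).edges.count s(x,y)) • SpanAux.cross χ s(x,y)) = 0 :=
      Finset.sum_eq_zero hper
    have hA : ∑ i ∈ I, (∑ e ∈ F, ((γ i.1).edges.count e) • SpanAux.cross χ e) = 0 := by
      rw [Finset.sum_comm]
      apply Finset.sum_eq_zero
      intro e he
      have hmul : ∑ i ∈ I, ((γ i.1).edges.count e) • SpanAux.cross χ e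
          = (∑ i ∈ I, (((γ i.1).edges.count e : ZMod 2))) * SpanAux.cross χ e := by
        rw [Finset.sum_mul]
        apply Finset.sum_congr rfl
        intro i _
        rw [nsmul_eq_mul]
      rw [hmul, hsum e he, zero_mul]
    have hB : ∑ i ∈ I, ((Pseg i.1).edges.count s(x,y)) • SpanAux.cross χ s(x,y) = 1 := by
      rw [Finset.sum_eq_single j]
      · have hc1 : (Pseg j.1).edges.count s(x,y) = 1 :=
          List.count_eq_one_of_mem (hsegnodup j.1) hf
        rw [hc1, one_nsmul, hcrossf]
      · intro b hb hbj
        have hnot : s(x,y) ∉ (Pseg b.1).edges :=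
          hdisj j.1 b.1 (fun hh => hbj (Fin.ext hh).symm) s(x,y) hf
        rw [List.count_eq_zero.mpr hnot, zero_nsmul]
      · intro hj'
        exact absurd hj hj'
    rw [Finset.sum_add_distrib, hA, hB, zero_add] at htot
    exact one_ne_zero htot
  -- final cardinality contradiction
  have hIcard : 0 < I.card := Finset.card_pos.mpr hIne
  set S1 : Finset (Sym2 V) := I.biUnion (fun i => (Pseg i.1).edges.toFinset) with hS1
  set S2 : Finset (Sym2 V) := I.biUnion (fun i => (γ i.1).edges.toFinset) with hS2
  have hS1card : S1.card = I.card * (D + 1) := by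
    rw [hS1, Finset.card_biUnion]
    · rw [Finset.sum_congr rfl (fun i hi =>
        (List.toFinset_card_of_nodup (hsegnodup i.1)).trans (hseglen i.1 i.isLt)),
        Finset.sum_const, smul_eq_mul]
    · intro a ha b hb hab
      rw [Function.onFun, Finset.disjoint_left]
      intro f hf1 hf2
      rw [List.mem_toFinset] at hf1 hf2
      exact hdisj a.1 b.1 (fun hh => hab (Fin.ext hh)) f hf1 hf2
  have hsub : S1 ⊆ S2 := by
    intro f hfmem
    rw [hS1, Finset.mem_biUnion] at hfmem
    obtain ⟨j, hj, hfj⟩ := hfmem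
    rw [List.mem_toFinset] at hfj
    by_contra hnf
    apply key f ((Pseg j.1).edges_subset_edgeSet hfj) ?_ j hj hfj
    intro i hi hfi
    apply hnf
    rw [hS2, Finset.mem_biUnion]
    exact ⟨i, hi, List.mem_toFinset.mpr hfi⟩
  have hS2card : S2.card ≤ I.card * D := by
    calc S2.card ≤ ∑ i ∈ I, ((γ i.1).edges.toFinset.card) := Finset.card_biUnion_le
    _ ≤ ∑ i ∈ I, D := by
        apply Finset.sum_le_sum
        intro i _
        calc (γ i.1).edges.toFinset.card ≤ (γ i.1).edges.length := (γ i.1).edges.toFinset_card_le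
        _ = (γ i.1).length := (γ i.1).length_edges
        _ ≤ D := hγ i.1
    _ = I.card * D := by rw [Finset.sum_const, smul_eq_mul]
  have hfin : I.card * (D + 1) ≤ I.card * D :=
    hS1card ▸ le_trans (Finset.card_le_card hsub) hS2card
  have := Nat.le_of_mul_le_mul_left hfin hIcard
  omega
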